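/- Let α, β, γ, c be real numbers with α > 0, γ > 0, β + c > 0, and take A = 0 in the system (★). Let (φ, ψ) : ℝ → ℝ² be a nonconstant solution of (★) with lim_{y→±∞} φ(y) = 0 and lim_{y→±∞} ψ(y) = 0, and let y₀ ∈ ℝ be the unique point with φ(y₀) = −3(β+c)/γ and ψ(y₀) = 0. Then φ(y) < 0 for all y ∈ ℝ, φ is strictly decreasing on (−∞, y₀), and φ is strictly increasing on (y₀, ∞). -/

import Mathlib

open Set Filter Metric Topology


/-- For the system (★) with `A = 0` and `γ > 0`, along the nonconstant
solution with `φ, ψ → 0` at `±∞` and `φ(y₀) = −3(β+c)/γ`, `ψ(y₀) = 0`, the profile `φ`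
is everywhere negative, strictly decreasing on `(−∞, y₀)` and strictly increasing on
`(y₀, ∞)`. -/
theorem stmt_9 (α β γ c : ℝ) (hα : 0 < α) (hγ : 0 < γ) (hβc : 0 < β + c)
    (φ ψ : ℝ → ℝ)
    (hφ : ∀ y : ℝ, HasDerivAt φ (ψ y) y)
    (hψ : ∀ y : ℝ, HasDerivAt ψ (((β + c) * φ y + γ / 2 * (φ y) ^ 2) / α) y)
    (hnc : ¬ ∀ y z : ℝ, (φ y, ψ y) = (φ z, ψ z))
    (hφtop : Filter.Tendsto φ Filter.atTop (nhds 0))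
    (hφbot : Filter.Tendsto φ Filter.atBot (nhds 0))
    (hψtop : Filter.Tendsto ψ Filter.atTop (nhds 0))
    (hψbot : Filter.Tendsto ψ Filter.atBot (nhds 0))
    (y₀ : ℝ) (hy₀ : φ y₀ = -3 * (β + c) / γ ∧ ψ y₀ = 0) :
    (∀ y : ℝ, φ y < 0) ∧
    StrictAntiOn φ (Set.Iio y₀) ∧
    StrictMonoOn φ (Set.Ioi y₀) := by
  obtain ⟨hφy₀, hψy₀⟩ := hy₀
  set m : ℝ := -3 * (β + c) / γ with hm_def
  have hcφ : Continuous φ := continuous_iff_continuousAt.mpr fun t => (hφ t).continuousAt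
  have hcψ : Continuous ψ := continuous_iff_continuousAt.mpr fun t => (hψ t).continuousAt
  -- Energy conservation
  set E : ℝ → ℝ := fun y => α/2 * ψ y^2 - (β+c)/2 * φ y^2 - γ/6 * φ y^3 with hE_def
  have hE' : ∀ y, HasDerivAt E 0 y := by
    intro y
    have h1 := (((hψ y).pow 2).const_mul (α/2)).sub (((hφ y).pow 2).const_mul ((β+c)/2))
    have h2 := h1.sub (((hφ y).pow 3).const_mul (γ/6))
    convert h2 using 1
    · rfl
    · rfl
    · rfl
    field_simp
    ring
  have hconst : ∀ y, E y = E 0 := fun y =>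
    is_const_of_deriv_eq_zero (fun x => (hE' x).differentiableAt) (fun x => (hE' x).deriv) y 0
  have hlim : Tendsto E atTop (𝓝 (α/2 * 0^2 - (β+c)/2 * 0^2 - γ/6 * 0^3)) :=
    (((hψtop.pow 2).const_mul (α/2)).sub ((hφtop.pow 2).const_mul ((β+c)/2))).sub
      ((hφtop.pow 3).const_mul (γ/6))
  have hE00 : E 0 = 0 := by
    have h1 : Tendsto E atTop (𝓝 (E 0)) := tendsto_const_nhds.congr fun y => (hconst y).symm
    have := tendsto_nhds_unique h1 hlim
    rw [this]; norm_num
  have hE0 : ∀ y, E y = 0 := fun y => (hconst y).trans hE00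
  have henergy : ∀ y, α * ψ y^2 = (β+c) * φ y^2 + γ/3 * φ y^3 := by
    intro y
    have h := hE0 y
    simp only [hE_def] at h
    linarith
  -- φ = 0 implies ψ = 0
  have hψ0 : ∀ y, φ y = 0 → ψ y = 0 := by
    intro y h
    have he := henergy y
    rw [h] at he
    have h2 : ψ y ^ 2 ≤ 0 := by nlinarith
    have h3 : ψ y ^ 2 = 0 := le_antisymm h2 (sq_nonneg _)
    exact (pow_eq_zero_iff two_ne_zero).mp h3
  -- no zero of φ
  have hφne : ∀ z : ℝ, φ z ≠ 0 := by
    intro z hz1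
    have hz2 := hψ0 z hz1
    set v : ℝ → (ℝ × ℝ) → (ℝ × ℝ) := fun _ p => (p.2, ((β+c) * p.1 + γ/2 * p.1^2)/α) with hv_def
    set f : ℝ → ℝ × ℝ := fun t => (φ t, ψ t) with hf_def
    have hfd : ∀ t, HasDerivAt f (v t (f t)) t := fun t => (hφ t).prodMk (hψ t)
    have hcf : Continuous f := hcφ.prodMk hcψ
    have key : ∀ y : ℝ, f y = (0, 0) := by
      intro y
      set a : ℝ := min y z - 1 with ha_def
      set b : ℝ := max y z + 1 with hb_def
      have haz : a < z := by rw [ha_def]; nlinarith [min_le_right y z]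
      have hzb : z < b := by rw [hb_def]; nlinarith [le_max_right y z]
      obtain ⟨C, hC⟩ := (isCompact_Icc (a := a) (b := b)).exists_bound_of_continuousOn
        hcf.continuousOn
      set R : ℝ := max C 0 with hR_def
      have hR0 : 0 ≤ R := le_max_right _ _
      have hfR : ∀ t ∈ Icc a b, f t ∈ closedBall (0 : ℝ × ℝ) R := by
        intro t ht
        rw [mem_closedBall_zero_iff]
        exact le_trans (hC t ht) (le_max_left _ _)
      set K : NNReal := Real.toNNReal (max 1 (((β+c) + γ * R)/α)) with hK_def
      have hK1 : (1 : ℝ) ≤ K := by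
        rw [hK_def, Real.coe_toNNReal _ (le_trans zero_le_one (le_max_left _ _))]
        exact le_max_left _ _
      have hK2 : ((β+c) + γ * R)/α ≤ K := by
        rw [hK_def, Real.coe_toNNReal _ (le_trans zero_le_one (le_max_left _ _))]
        exact le_max_right _ _
      have hlip : ∀ t : ℝ, LipschitzOnWith K (v t) (closedBall (0 : ℝ × ℝ) R) := by
        intro t
        apply LipschitzOnWith.of_dist_le_mul
        intro p hp q hq
        rw [mem_closedBall_zero_iff] at hp hq
        have hp1 : |p.1| ≤ R := le_trans (by simpa [Real.norm_eq_abs] using norm_fst_le p) hp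
        have hq1 : |q.1| ≤ R := le_trans (by simpa [Real.norm_eq_abs] using norm_fst_le q) hq
        rw [Prod.dist_eq, Prod.dist_eq]
        simp only [hv_def, Real.dist_eq]
        have hd1 : |p.1 - q.1| ≤ max |p.1 - q.1| |p.2 - q.2| := le_max_left _ _
        have hd2 : |p.2 - q.2| ≤ max |p.1 - q.1| |p.2 - q.2| := le_max_right _ _
        apply max_le
        · calc |p.2 - q.2| ≤ 1 * max |p.1 - q.1| |p.2 - q.2| := by rw [one_mul]; exact hd2
            _ ≤ K * max (dist p.1 q.1) (dist p.2 q.2) := by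
                rw [Real.dist_eq, Real.dist_eq]
                apply mul_le_mul_of_nonneg_right hK1 (le_trans (abs_nonneg _) hd1)
        · have expand : ((β+c) * p.1 + γ/2 * p.1^2)/α - ((β+c) * q.1 + γ/2 * q.1^2)/α
              = ((β+c) * (p.1 - q.1) + γ/2 * (p.1 + q.1) * (p.1 - q.1))/α := by ring
          rw [expand]
          have habs : |((β+c) * (p.1 - q.1) + γ/2 * (p.1 + q.1) * (p.1 - q.1))/α|
              ≤ (((β+c) + γ * R)/α) * |p.1 - q.1| := by
            rw [abs_div, abs_of_pos hα]
            have h0 : |(β+c) * (p.1 - q.1) + γ/2 * (p.1 + q.1) * (p.1 - q.1)|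
                ≤ ((β+c) + γ * R) * |p.1 - q.1| := by
              calc |(β+c) * (p.1 - q.1) + γ/2 * (p.1 + q.1) * (p.1 - q.1)|
                  ≤ |(β+c) * (p.1 - q.1)| + |γ/2 * (p.1 + q.1) * (p.1 - q.1)| := abs_add_le _ _
                _ ≤ (β+c) * |p.1 - q.1| + γ/2 * (2*R) * |p.1 - q.1| := by
                    rw [abs_mul, abs_mul, abs_mul]
                    gcongr
                    · rw [abs_of_pos hβc]
                    · rw [abs_of_pos (by positivity : (0:ℝ) < γ/2)]
                    · calc |p.1 + q.1| ≤ |p.1| + |q.1| := abs_add_le _ _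
                        _ ≤ 2 * R := by linarith
                _ = ((β+c) + γ * R) * |p.1 - q.1| := by ring
            calc |(β+c) * (p.1 - q.1) + γ/2 * (p.1 + q.1) * (p.1 - q.1)| / α
                ≤ (((β+c) + γ * R) * |p.1 - q.1|) / α := by gcongr
              _ = (((β+c) + γ * R)/α) * |p.1 - q.1| := by ring
          calc |((β+c) * (p.1 - q.1) + γ/2 * (p.1 + q.1) * (p.1 - q.1))/α|
              ≤ (((β+c) + γ * R)/α) * |p.1 - q.1| := habs
            _ ≤ K * max (dist p.1 q.1) (dist p.2 q.2) := by
                rw [Real.dist_eq, Real.dist_eq]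
                apply mul_le_mul hK2 hd1 (abs_nonneg _)
                  (le_trans (by positivity) hK2)
      have heq := ODE_solution_unique_of_mem_Icc (v := v) (s := fun _ => closedBall (0:ℝ×ℝ) R)
        (g := fun _ => ((0:ℝ),(0:ℝ)))
        (fun t _ => hlip t) (t₀ := z) ⟨haz, hzb⟩ hcf.continuousOn
        (fun t _ => hfd t) (fun t ht => hfR t (Ioo_subset_Icc_self ht))
        continuousOn_const
        (fun t _ => by
          convert hasDerivAt_const t ((0:ℝ),(0:ℝ)) using 1
          simp [hv_def])
        (fun t _ => by simpa using hR0)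
        (by simp only [hf_def, hz1, hz2])
      have hy : y ∈ Icc a b := by
        constructor
        · rw [ha_def]; nlinarith [min_le_left y z]
        · rw [hb_def]; nlinarith [le_max_left y z]
      exact heq hy
    apply hnc
    intro y w
    have h1 := key y
    have h2 := key w
    simp only [hf_def, Prod.mk.injEq] at h1 h2
    simp [h1.1, h1.2, h2.1, h2.2]
  -- φ is everywhere negative
  have hmneg : m < 0 := by
    rw [hm_def]
    apply div_neg_of_neg_of_pos (by linarith) hγ
  have hφneg : ∀ y, φ y < 0 := by
    intro y
    rcases lt_trichotomy (φ y) 0 with h | h | h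
    · exact h
    · exact absurd h (hφne y)
    · exfalso
      have hy₀neg : φ y₀ < 0 := by rw [hφy₀]; exact hmneg
      rcases le_total y y₀ with hle | hle
      · obtain ⟨ξ, _, hξ⟩ := intermediate_value_Icc' hle hcφ.continuousOn
          ⟨hy₀neg.le, h.le⟩
        exact hφne ξ hξ
      · obtain ⟨ξ, _, hξ⟩ := intermediate_value_Icc hle hcφ.continuousOn
          ⟨hy₀neg.le, h.le⟩
        exact hφne ξ hξ
  -- ψ = 0 implies φ = m
  have hψzero_phi : ∀ y, ψ y = 0 → φ y = m := by
    intro y h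
    have he := henergy y
    rw [h] at he
    have h1 : φ y ^ 2 * ((β+c) + γ/3 * φ y) = 0 := by linear_combination -he
    rcases mul_eq_zero.mp h1 with h2 | h2
    · exact absurd ((pow_eq_zero_iff two_ne_zero).mp h2) (hφne y)
    · rw [hm_def, eq_div_iff hγ.ne']
      linarith
  -- m ≤ φ
  have hm_le : ∀ y, m ≤ φ y := by
    intro y
    have h2 : 0 ≤ (β+c) + γ/3 * φ y := by
      by_contra hcon
      push_neg at hcon
      have h3 : φ y ^ 2 * ((β+c) + γ/3 * φ y) < 0 :=
        mul_neg_of_pos_of_neg (pow_two_pos_of_ne_zero (hφne y)) hcon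
      have he := henergy y
      nlinarith [mul_nonneg hα.le (sq_nonneg (ψ y))]
    rw [hm_def, div_le_iff₀ hγ]
    linarith
  -- ψ vanishes only at y₀
  have hψonly : ∀ y, ψ y = 0 → y = y₀ := by
    have key : ∀ p q : ℝ, p < q → φ p = m → φ q = m → False := by
      intro p q hpq hp hq
      obtain ⟨y2, hy2, hmax⟩ := isCompact_Icc.exists_isMaxOn (nonempty_Icc.mpr hpq.le)
        hcφ.continuousOn
      by_cases hcase : φ y2 = m
      · have hall : ∀ t ∈ Icc p q, φ t = m := fun t ht =>
          le_antisymm (hcase ▸ hmax ht) (hm_le t)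
        have hψzero : ∀ s ∈ Ioo p q, ψ s = 0 := by
          intro s hs
          have hnb' : Icc p q ∈ 𝓝 s := Icc_mem_nhds hs.1 hs.2
          have hloc : φ =ᶠ[𝓝 s] fun _ => m := eventually_of_mem hnb' hall
          have hd : HasDerivAt φ 0 s := (hasDerivAt_const s m).congr_of_eventuallyEq hloc
          exact (hφ s).unique hd
        set t : ℝ := (p+q)/2 with ht_def
        have htI : t ∈ Ioo p q := ⟨by rw [ht_def]; linarith, by rw [ht_def]; linarith⟩
        have hloc2 : ψ =ᶠ[𝓝 t] fun _ => 0 :=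
          eventually_of_mem (Ioo_mem_nhds htI.1 htI.2) hψzero
        have hd0 : HasDerivAt ψ 0 t := (hasDerivAt_const t 0).congr_of_eventuallyEq hloc2
        have huniq := (hψ t).unique hd0
        have hφt : φ t = m := hall t (Ioo_subset_Icc_self htI)
        rw [hφt, hm_def] at huniq
        rw [div_eq_zero_iff] at huniq
        rcases huniq with h | h
        · field_simp at h
          nlinarith [mul_pos (mul_pos hβc hβc) (mul_pos hγ hγ)]
        · exact hα.ne' h
      · have hlt : m < φ y2 := lt_of_le_of_ne (hm_le y2) (Ne.symm hcase)
        have hy2p : y2 ≠ p := fun h => by rw [h, hp] at hlt; exact lt_irrefl _ hlt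
        have hy2q : y2 ≠ q := fun h => by rw [h, hq] at hlt; exact lt_irrefl _ hlt
        have hy2I : y2 ∈ Ioo p q :=
          ⟨lt_of_le_of_ne hy2.1 (Ne.symm hy2p), lt_of_le_of_ne hy2.2 hy2q⟩
        have hlm : IsLocalMax φ y2 := hmax.isLocalMax (Icc_mem_nhds hy2I.1 hy2I.2)
        have hz := hlm.hasDerivAt_eq_zero (hφ y2)
        exact hcase (hψzero_phi y2 hz)
    intro y hy
    by_contra hne
    have h1 : φ y = m := hψzero_phi y hy
    rcases lt_or_gt_of_ne hne with h | h
    · exact key y y₀ h h1 hφy₀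
    · exact key y₀ y h hφy₀ h1
  -- slope at y₀
  have hk : 0 < ((β + c) * φ y₀ + γ / 2 * (φ y₀) ^ 2) / α := by
    rw [hφy₀, hm_def]
    have heqv : (β + c) * (-3 * (β + c) / γ) + γ / 2 * (-3 * (β + c) / γ) ^ 2
        = 3 * (β+c)^2 / (2*γ) := by
      field_simp
      ring
    rw [heqv]
    positivity
  have hslope := hasDerivAt_iff_tendsto_slope.mp (hψ y₀)
  have hev : ∀ᶠ t in 𝓝[≠] y₀, 0 < slope ψ y₀ t := hslope.eventually (eventually_gt_nhds hk)
  have hleft : ∀ y < y₀, ψ y < 0 := by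
    intro y hy
    have hex : ∃ y', y < y' ∧ y' < y₀ ∧ ψ y' < 0 := by
      have h1 : ∀ᶠ t in 𝓝[<] y₀, 0 < slope ψ y₀ t :=
        hev.filter_mono (nhdsWithin_mono y₀ (fun x hx => ne_of_lt hx))
      obtain ⟨t, hts, htm⟩ :=
        (h1.and (eventually_of_mem (Ioo_mem_nhdsLT_of_mem ⟨hy, le_refl y₀⟩)
          (fun x hx => hx))).exists
      refine ⟨t, htm.1, htm.2, ?_⟩
      rw [slope_def_field, hψy₀, sub_zero] at hts
      rcases div_pos_iff.mp hts with ⟨_, h2⟩ | ⟨h2, _⟩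
      · linarith [htm.2]
      · exact h2
    obtain ⟨y', hyy', hy'y₀, hψy'⟩ := hex
    rcases lt_trichotomy (ψ y) 0 with h | h | h
    · exact h
    · exact absurd (hψonly y h) (ne_of_lt hy)
    · exfalso
      obtain ⟨ξ, hξI, hξ⟩ := intermediate_value_Icc' hyy'.le hcψ.continuousOn
        ⟨hψy'.le, h.le⟩
      have : ξ = y₀ := hψonly ξ hξ
      linarith [hξI.2]
  have hright : ∀ y, y₀ < y → 0 < ψ y := by
    intro y hy
    have hex : ∃ y', y₀ < y' ∧ y' < y ∧ 0 < ψ y' := by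
      have h1 : ∀ᶠ t in 𝓝[>] y₀, 0 < slope ψ y₀ t :=
        hev.filter_mono (nhdsWithin_mono y₀ (fun x hx => ne_of_gt hx))
      obtain ⟨t, hts, htm⟩ :=
        (h1.and (eventually_of_mem (Ioo_mem_nhdsGT_of_mem ⟨le_refl y₀, hy⟩)
          (fun x hx => hx))).exists
      refine ⟨t, htm.1, htm.2, ?_⟩
      rw [slope_def_field, hψy₀, sub_zero] at hts
      rcases div_pos_iff.mp hts with ⟨h2, _⟩ | ⟨_, h2⟩
      · exact h2
      · linarith [htm.1]
    obtain ⟨y', hy₀y', hy'y, hψy'⟩ := hex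
    rcases lt_trichotomy (ψ y) 0 with h | h | h
    · exfalso
      obtain ⟨ξ, hξI, hξ⟩ := intermediate_value_Icc' hy'y.le hcψ.continuousOn
        ⟨h.le, hψy'.le⟩
      have : ξ = y₀ := hψonly ξ hξ
      linarith [hξI.1]
    · exact absurd (hψonly y h) (ne_of_gt hy)
    · exact h
  refine ⟨hφneg, ?_, ?_⟩
  · exact strictAntiOn_of_deriv_neg (convex_Iio y₀) hcφ.continuousOn
      (fun x hx => by rw [(hφ x).deriv]; exact hleft x (by simpa using hx))
  · exact strictMonoOn_of_deriv_pos (convex_Ioi y₀) hcφ.continuousOn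
      (fun x hx => by rw [(hφ x).deriv]; exact hright x (by simpa using hx))
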